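/- Let V ∈ U(d) be unitary and N ≥ 1. Then 0 ∈ W(V^{⊗N}) (equivalently, 0 lies in the convex hull of the eigenvalues of the unitary matrix V^{⊗N}) if and only if N·Θ(V) ≥ π. Moreover, if N·Θ(V) < π, then Θ(V^{⊗N}) = N·Θ(V). -/

import Mathlib

open Matrix MeasureTheory
open scoped ENNReal ComplexOrder

noncomputable section

namespace Paper

/-- Trace norm `‖X‖₁ = Tr √(Xᴴ X)`. -/
noncomputable def traceNorm {n : Type*} [Fintype n] [DecidableEq n] (X : Matrix n n ℂ) : ℝ :=
  (((Matrix.posSemidef_conjTranspose_mul_self X).1.eigenvectorUnitary : Matrix n n ℂ) *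
    Matrix.diagonal (((↑) : ℝ → ℂ) ∘ (Real.sqrt ·) ∘
      (Matrix.posSemidef_conjTranspose_mul_self X).1.eigenvalues) *
    (star (Matrix.posSemidef_conjTranspose_mul_self X).1.eigenvectorUnitary : Matrix n n ℂ)).trace.re

/-- `(S ⊗ id)(X)`, the map `S` applied to the first tensor factor. -/
def tensorApplyLeft {n n' m : Type*} [Fintype n] [Fintype m]
    (S : Matrix n n ℂ →ₗ[ℂ] Matrix n' n' ℂ)
    (X : Matrix (n × m) (n × m) ℂ) : Matrix (n' × m) (n' × m) ℂ :=
  Matrix.of fun p q => S (Matrix.of fun i j => X (i, p.2) (j, q.2)) p.1 q.1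

/-- Diamond norm of a linear map between matrix spaces. -/
noncomputable def diamondNorm {n n' : Type*} [Fintype n] [DecidableEq n] [Fintype n']
    [DecidableEq n'] (S : Matrix n n ℂ →ₗ[ℂ] Matrix n' n' ℂ) : ℝ :=
  sSup { t : ℝ | ∃ (k : ℕ) (X : Matrix (n × Fin (k + 1)) (n × Fin (k + 1)) ℂ),
    traceNorm X = 1 ∧ t = traceNorm (tensorApplyLeft S X) }

/-- The completely dephasing channel in the standard basis. -/
def dephaseMap (n : Type*) [Fintype n] [DecidableEq n] :
    Matrix n n ℂ →ₗ[ℂ] Matrix n n ℂ where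
  toFun X := Matrix.diagonal fun i => X i i
  map_add' X Y := by
    ext i j
    by_cases h : i = j <;> simp [Matrix.diagonal_apply, h]
  map_smul' c X := by
    ext i j
    by_cases h : i = j <;> simp [Matrix.diagonal_apply, h]

/-- The unitary channel `Φ_U(X) = U X Uᴴ`. -/
def unitaryChannel {n : Type*} [Fintype n] (U : Matrix n n ℂ) :
    Matrix n n ℂ →ₗ[ℂ] Matrix n n ℂ where
  toFun X := U * X * Uᴴ
  map_add' X Y := by simp [Matrix.mul_add, Matrix.add_mul]
  map_smul' c X := by simp [mul_smul_comm, smul_mul_assoc]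

/-- The von Neumann measurement channel `𝒫_U(σ) = Σ_i ⟨i|U† σ U|i⟩ |i⟩⟨i| = diag(U† σ U)`. -/
def measChannel {n : Type*} [Fintype n] [DecidableEq n] (U : Matrix n n ℂ) :
    Matrix n n ℂ →ₗ[ℂ] Matrix n n ℂ :=
  (dephaseMap n).comp (unitaryChannel Uᴴ)

/-- `N`-fold tensor (Kronecker) power of a matrix. -/
def tensorPow {d : ℕ} (U : Matrix (Fin d) (Fin d) ℂ) (N : ℕ) :
    Matrix (Fin N → Fin d) (Fin N → Fin d) ℂ :=
  Matrix.of fun f g => ∏ k, U (f k) (g k)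

/-- Tensor product of a family of `d × d` matrices. -/
def tensorFamily {d N : ℕ} (ρ : Fin N → Matrix (Fin d) (Fin d) ℂ) :
    Matrix (Fin N → Fin d) (Fin N → Fin d) ℂ :=
  Matrix.of fun f g => ∏ k, (ρ k) (f k) (g k)

/-- Density matrices. -/
def IsDensityMatrix {n : Type*} [Fintype n] (ρ : Matrix n n ℂ) : Prop :=
  ρ.PosSemidef ∧ ρ.trace = 1

/-- The set of diagonal unitary matrices `𝒟𝒰`. -/
def diagUnitary (n : Type*) [Fintype n] [DecidableEq n] : Set (Matrix n n ℂ) :=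
  { E | E ∈ Matrix.unitaryGroup n ℂ ∧ E.IsDiag }

/-- `Θ(U)`: the angle of the shortest arc of the unit circle containing all eigenvalues. -/
noncomputable def thetaArc {n : Type*} [Fintype n] [DecidableEq n] (U : Matrix n n ℂ) : ℝ :=
  sInf { t : ℝ | 0 ≤ t ∧ ∃ α : ℝ, ∀ lam ∈ spectrum ℂ U, ∃ s : ℝ, 0 ≤ s ∧ s ≤ t ∧
    lam = Complex.exp (Complex.I * (↑α + ↑s)) }

/-- `Υ(U) = min_{E ∈ 𝒟𝒰} Θ(UE)`. -/
noncomputable def upsilonArc {n : Type*} [Fintype n] [DecidableEq n] (U : Matrix n n ℂ) : ℝ :=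
  sInf { t : ℝ | ∃ E ∈ diagUnitary n, t = thetaArc (U * E) }

/-- Numerical range `W(A)`. -/
def numericalRange {n : Type*} [Fintype n] (A : Matrix n n ℂ) : Set ℂ :=
  { z | ∃ x : n → ℂ, (∑ i, ‖x i‖ ^ 2) = 1 ∧ z = star x ⬝ᵥ A.mulVec x }

/-- minimal modulus over the numerical range -/
noncomputable def nuMin {n : Type*} [Fintype n] (A : Matrix n n ℂ) : ℝ :=
  sInf { r : ℝ | ∃ z ∈ numericalRange A, r = ‖z‖ }

/-- Operator (spectral) norm of a matrix. -/
noncomputable def opNorm {n : Type*} [Fintype n] [DecidableEq n] (A : Matrix n n ℂ) : ℝ :=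
  ‖Matrix.toEuclideanCLM (𝕜 := ℂ) A‖

/-- Matrix of the orthogonal projection onto a subspace of `EuclideanSpace ℂ n`. -/
noncomputable def projMatrix {n : Type*} [Fintype n] [DecidableEq n]
    (K : Submodule ℂ (EuclideanSpace ℂ n)) : Matrix n n ℂ :=
  Matrix.toEuclideanLin.symm (K.subtype ∘ₗ (K.orthogonalProjectionOnto).toLinearMap)

/-- Matrix of the orthogonal projection onto the eigenspace of `A` for eigenvalue `lam`. -/
noncomputable def eigProj {n : Type*} [Fintype n] [DecidableEq n] (A : Matrix n n ℂ) (lam : ℂ) :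
    Matrix n n ℂ :=
  projMatrix (Module.End.eigenspace (Matrix.toEuclideanLin A) lam)

end Paper

namespace Paper

/-- Optimal unambiguous discrimination probability of `𝒫_𝟙` vs `𝒫_U` without entanglement. -/
noncomputable def puNoEnt {n : Type*} [Fintype n] [DecidableEq n] (U : Matrix n n ℂ) : ℝ :=
  sSup { t : ℝ | ∃ σ M₁ M₂ M₃ : Matrix n n ℂ,
    IsDensityMatrix σ ∧ M₁.PosSemidef ∧ M₂.PosSemidef ∧ M₃.PosSemidef ∧ M₁ + M₂ + M₃ = 1 ∧
    (M₂ * measChannel (1 : Matrix n n ℂ) σ).trace = 0 ∧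
    (M₁ * measChannel U σ).trace = 0 ∧
    t = (1 / 2) * (((M₁ * measChannel (1 : Matrix n n ℂ) σ).trace).re +
                   ((M₂ * measChannel U σ).trace).re) }

/-- Optimal entanglement-assisted unambiguous discrimination probability of `𝒫_𝟙` vs `𝒫_U`. -/
noncomputable def puEnt {n : Type*} [Fintype n] [DecidableEq n] (U : Matrix n n ℂ) : ℝ :=
  sSup { t : ℝ | ∃ (k : ℕ) (σ M₁ M₂ M₃ : Matrix (n × Fin (k + 1)) (n × Fin (k + 1)) ℂ),
    IsDensityMatrix σ ∧ M₁.PosSemidef ∧ M₂.PosSemidef ∧ M₃.PosSemidef ∧ M₁ + M₂ + M₃ = 1 ∧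
    (M₂ * tensorApplyLeft (measChannel (1 : Matrix n n ℂ)) σ).trace = 0 ∧
    (M₁ * tensorApplyLeft (measChannel U) σ).trace = 0 ∧
    t = (1 / 2) * (((M₁ * tensorApplyLeft (measChannel (1 : Matrix n n ℂ)) σ).trace).re +
                   ((M₂ * tensorApplyLeft (measChannel U) σ).trace).re) }

/-- `Π_A = Σ_{i ∈ A} |i⟩⟨i|`. -/
noncomputable def basisProj {n : Type*} [Fintype n] [DecidableEq n] (A : Finset n) :
    Matrix n n ℂ :=
  ∑ i ∈ A, Matrix.single i i (1 : ℂ)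

/-- `ℙ_{Γ,Δ}`: projector onto `span{U|i⟩ : i ∈ Γᶜ} ∩ span{|j⟩ : j ∈ Δᶜ}`. -/
noncomputable def PGD {n : Type*} [Fintype n] [DecidableEq n] (U : Matrix n n ℂ)
    (Γ Δ : Finset n) : Matrix n n ℂ :=
  projMatrix
    ((Submodule.span ℂ { v : EuclideanSpace ℂ n |
        ∃ i ∉ Γ, v = (WithLp.equiv 2 (n → ℂ)).symm (fun r => U r i) }) ⊓
     (Submodule.span ℂ { v : EuclideanSpace ℂ n |
        ∃ j ∉ Δ, v = (WithLp.equiv 2 (n → ℂ)).symm (Pi.single j 1) }))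

/-- `W` acting on the `k`-th of `N` registers (identity elsewhere). -/
def actOn {d : ℕ} (N : ℕ) (W : Matrix (Fin d) (Fin d) ℂ) (k : ℕ) :
    Matrix (Fin N → Fin d) (Fin N → Fin d) ℂ :=
  Matrix.of fun f g => ∏ j : Fin N,
    if (j : ℕ) = k then W (f j) (g j) else (if f j = g j then (1 : ℂ) else 0)

/-- A system operator extended by identity on the ancilla. -/
def sysOp {d N m : ℕ} (A : Matrix (Fin N → Fin d) (Fin N → Fin d) ℂ) :
    Matrix ((Fin N → Fin d) × Fin m) ((Fin N → Fin d) × Fin m) ℂ :=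
  Matrix.of fun p q => A p.1 q.1 * (if p.2 = q.2 then (1 : ℂ) else 0)

/-- `C` is classically controlled on the first `k` registers, i.e. of the form
`Σ_{i₁,…,i_k} |i₁…i_k⟩⟨i₁…i_k| ⊗ V_{i₁…i_k}`. -/
def ControlledOnFirst {d N m : ℕ} (k : ℕ)
    (C : Matrix ((Fin N → Fin d) × Fin m) ((Fin N → Fin d) × Fin m) ℂ) : Prop :=
  ∀ p q, (∃ j : Fin N, (j : ℕ) < k ∧ p.1 j ≠ q.1 j) → C p q = 0

/-- The sequential-scheme unitary
`A_W = (𝟙⊗…⊗W⊗𝟙ₘ)·C_{N-1}·…·C₁·(W⊗𝟙⊗…⊗𝟙ₘ)`. -/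
noncomputable def seqUnitary {d N m : ℕ} (W : Matrix (Fin d) (Fin d) ℂ)
    (C : ℕ → Matrix ((Fin N → Fin d) × Fin m) ((Fin N → Fin d) × Fin m) ℂ) :
    Matrix ((Fin N → Fin d) × Fin m) ((Fin N → Fin d) × Fin m) ℂ :=
  (((List.range (N - 1)).reverse.map fun j =>
      sysOp (actOn N W (j + 1)) * C (j + 1)).prod) * sysOp (actOn N W 0)

/-- Dephasing in the standard product basis on the first `N` registers only. -/
def dephaseFirst (d N m : ℕ) :
    Matrix ((Fin N → Fin d) × Fin m) ((Fin N → Fin d) × Fin m) ℂ →ₗ[ℂ]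
    Matrix ((Fin N → Fin d) × Fin m) ((Fin N → Fin d) × Fin m) ℂ where
  toFun X := Matrix.of fun p q => if p.1 = q.1 then X p q else 0
  map_add' X Y := by
    ext p q
    by_cases h : p.1 = q.1 <;> simp [h]
  map_smul' c X := by
    ext p q
    by_cases h : p.1 = q.1 <;> simp [h]

/-- The Hadamard matrix. -/
noncomputable def Hmat : Matrix (Fin 2) (Fin 2) ℂ :=
  (((1 : ℝ) / Real.sqrt 2 : ℝ) : ℂ) • !![1, 1; 1, -1]

/-- `ψ = (|1⟩⊗|1⟩ − |2⟩⊗|2⟩)/√2`. -/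
noncomputable def psiVec : Fin 2 × Fin 2 → ℂ := fun p =>
  if p = (0, 0) then (((1 : ℝ) / Real.sqrt 2 : ℝ) : ℂ)
  else if p = (1, 1) then -(((1 : ℝ) / Real.sqrt 2 : ℝ) : ℂ) else 0

/-- `ρ = |ψ⟩⟨ψ|`. -/
noncomputable def rhoPsi : Matrix (Fin 2 × Fin 2) (Fin 2 × Fin 2) ℂ :=
  Matrix.of fun p q => psiVec p * (starRingEnd ℂ) (psiVec q)

end Paper

namespace Paper

lemma tensorPow_mul {d N : ℕ} (A B : Matrix (Fin d) (Fin d) ℂ) :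
    tensorPow (A * B) N = tensorPow A N * tensorPow B N := by
  ext f g
  simp only [tensorPow, Matrix.mul_apply, Matrix.of_apply]
  rw [Finset.prod_univ_sum, Fintype.piFinset_univ]
  simp [Finset.prod_mul_distrib]

lemma tensorPow_conjTranspose {d N : ℕ} (A : Matrix (Fin d) (Fin d) ℂ) :
    (tensorPow A N)ᴴ = tensorPow Aᴴ N := by
  ext f g
  simp [tensorPow, Matrix.conjTranspose_apply, map_prod]

lemma tensorPow_one {d N : ℕ} : tensorPow (1 : Matrix (Fin d) (Fin d) ℂ) N = 1 := by
  ext f g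
  by_cases h : f = g
  · subst h; simp [tensorPow, Matrix.one_apply]
  · obtain ⟨k, hk⟩ := Function.ne_iff.mp h
    simp only [tensorPow, Matrix.of_apply, Matrix.one_apply, if_neg h]
    exact Finset.prod_eq_zero (Finset.mem_univ k) (by simp [hk])

lemma tensorPow_unitary {d N : ℕ} (U : Matrix (Fin d) (Fin d) ℂ)
    (hU : U ∈ Matrix.unitaryGroup (Fin d) ℂ) :
    tensorPow U N ∈ Matrix.unitaryGroup (Fin N → Fin d) ℂ := by
  rw [Matrix.mem_unitaryGroup_iff]
  have h1 : U * star U = 1 := Matrix.mem_unitaryGroup_iff.mp hU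
  have : star (tensorPow U N) = tensorPow (star U) N := tensorPow_conjTranspose U
  rw [this, ← tensorPow_mul, h1, tensorPow_one]

lemma tensorPow_diagonal {d N : ℕ} (μ : Fin d → ℂ) :
    tensorPow (Matrix.diagonal μ) N
      = Matrix.diagonal (fun f : Fin N → Fin d => ∏ k, μ (f k)) := by
  ext f g
  by_cases h : f = g
  · subst h; simp [tensorPow, Matrix.diagonal_apply_eq]
  · obtain ⟨k, hk⟩ := Function.ne_iff.mp h
    simp only [tensorPow, Matrix.of_apply, Matrix.diagonal_apply_ne _ h]
    exact Finset.prod_eq_zero (Finset.mem_univ k) (by simp [Matrix.diagonal_apply_ne _ hk])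


open Module.End in
set_option maxHeartbeats 1000000 in
lemma unitary_diag {d : ℕ} (V : Matrix (Fin d) (Fin d) ℂ)
    (hV : V ∈ Matrix.unitaryGroup (Fin d) ℂ) :
    ∃ (U : Matrix (Fin d) (Fin d) ℂ) (μ : Fin d → ℂ),
      U ∈ Matrix.unitaryGroup (Fin d) ℂ ∧ V = U * Matrix.diagonal μ * Uᴴ := by
  have h1 : V * Vᴴ = 1 := by
    simpa [Matrix.star_eq_conjTranspose] using Matrix.mem_unitaryGroup_iff.mp hV
  have h2 : Vᴴ * V = 1 := by
    simpa [Matrix.star_eq_conjTranspose] using Matrix.mem_unitaryGroup_iff'.mp hV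
  set A : Matrix (Fin d) (Fin d) ℂ := V + Vᴴ with hAdef
  set B : Matrix (Fin d) (Fin d) ℂ := Complex.I • (Vᴴ - V) with hBdef
  have hA : A.IsHermitian := by
    simp [Matrix.IsHermitian, hAdef, Matrix.conjTranspose_add, add_comm]
  have hB : B.IsHermitian := by
    simp only [Matrix.IsHermitian, hBdef, Matrix.conjTranspose_smul,
      Matrix.conjTranspose_sub, Matrix.conjTranspose_conjTranspose]
    rw [Complex.star_def, Complex.conj_I, neg_smul, ← smul_neg, neg_sub]
  have hABcomm : A * B = B * A := by
    rw [hAdef, hBdef, Matrix.mul_smul, Matrix.smul_mul]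
    congr 1
    simp only [mul_add, add_mul, mul_sub, sub_mul, h1, h2]
    abel
  have hVAB : V = ((1:ℂ)/2) • A + (Complex.I/2) • B := by
    rw [hAdef, hBdef, smul_smul]
    rw [show Complex.I/2 * Complex.I = -(1/2) by
      rw [div_mul_eq_mul_div, Complex.I_mul_I]; norm_num]
    ext i j
    simp only [Matrix.add_apply, Matrix.smul_apply, Matrix.sub_apply, smul_eq_mul]
    ring
  set lA := Matrix.toEuclideanLin A with hlAdef
  set lB := Matrix.toEuclideanLin B with hlBdef
  have hlA : lA.IsSymmetric := Matrix.isHermitian_iff_isSymmetric.mp hA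
  have hlB : lB.IsSymmetric := Matrix.isHermitian_iff_isSymmetric.mp hB
  have hc : Commute lA lB := by
    have : ∀ (X Y : Matrix (Fin d) (Fin d) ℂ),
        Matrix.toEuclideanLin X ∘ₗ Matrix.toEuclideanLin Y = Matrix.toEuclideanLin (X * Y) := by
      intro X Y
      apply LinearMap.ext
      intro x
      simp [Matrix.toEuclideanLin_apply, Matrix.mulVec_mulVec]
    rw [Commute, SemiconjBy, Module.End.mul_eq_comp, Module.End.mul_eq_comp, this, this, hABcomm]
  classical
  set P : ℂ × ℂ → Submodule ℂ (EuclideanSpace ℂ (Fin d)) :=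
    fun p => eigenspace lA p.2 ⊓ eigenspace lB p.1 with hPdef
  have horthfull := LinearMap.IsSymmetric.orthogonalFamily_eigenspace_inf_eigenspace hlA hlB
  have hfinB : {μ : ℂ | Module.End.HasEigenvalue lB μ}.Finite :=
    Module.End.finite_hasEigenvalue (f := lB)
  have hfinA : {μ : ℂ | Module.End.HasEigenvalue lA μ}.Finite :=
    Module.End.finite_hasEigenvalue (f := lA)
  have hfin : {p : ℂ × ℂ | P p ≠ ⊥}.Finite := by
    refine Set.Finite.subset (hfinB.prod hfinA) ?_
    intro p hp
    simp only [Set.mem_setOf_eq, hPdef] at hp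
    refine Set.mem_prod.mpr ⟨?_, ?_⟩
    · refine Module.End.hasEigenvalue_iff.mpr (fun hbot => hp ?_)
      exact le_bot_iff.mp (le_trans inf_le_right (le_of_eq hbot))
    · refine Module.End.hasEigenvalue_iff.mpr (fun hbot => hp ?_)
      exact le_bot_iff.mp (le_trans inf_le_left (le_of_eq hbot))
  letI : Fintype {p : ℂ × ℂ // P p ≠ ⊥} := hfin.fintype
  set ι' := {p : ℂ × ℂ // P p ≠ ⊥} with hι'def
  have orth := horthfull.comp
    (Subtype.val_injective : Function.Injective (fun i : ι' => i.val))
  have htop : ⨆ i : ι', P i.val = ⊤ := by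
    rw [← hlA.iSup_iSup_eigenspace_inf_eigenspace_eq_top_of_commute hlB hc]
    apply le_antisymm
    · apply iSup_le; intro i
      apply le_iSup_of_le i.val.2
      exact le_iSup_of_le i.val.1 le_rfl
    · apply iSup_le; intro a; apply iSup_le; intro c
      by_cases h : P (c, a) = ⊥
      · rw [show eigenspace lA a ⊓ eigenspace lB c = P (c, a) from rfl, h]
        exact bot_le
      · exact le_iSup_of_le (⟨(c, a), h⟩ : ι') le_rfl
  have internal : DirectSum.IsInternal (fun i : ι' => P i.val) := by
    rw [orth.isInternal_iff]
    rw [htop, Submodule.top_orthogonal_eq_bot]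
  have hd : Module.finrank ℂ (EuclideanSpace ℂ (Fin d)) = d := finrank_euclideanSpace_fin
  set b := internal.subordinateOrthonormalBasis hd orth with hbdef
  set χ : Fin d → ℂ × ℂ :=
    fun a => (internal.subordinateOrthonormalBasisIndex hd a orth).val with hχdef
  set μ : Fin d → ℂ := fun a => ((1:ℂ)/2) * (χ a).2 + (Complex.I/2) * (χ a).1 with hμdef
  have heig : ∀ a : Fin d, Matrix.toEuclideanLin V (b a) = μ a • b a := by
    intro a
    have hmem := internal.subordinateOrthonormalBasis_subordinate hd a orth
    have hmemA : lA (b a) = (χ a).2 • b a :=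
      Module.End.mem_eigenspace_iff.mp hmem.1
    have hmemB : lB (b a) = (χ a).1 • b a :=
      Module.End.mem_eigenspace_iff.mp hmem.2
    rw [hVAB]
    simp only [map_add, _root_.map_smul, LinearMap.add_apply, LinearMap.smul_apply]
    rw [show Matrix.toEuclideanLin A (b a) = (χ a).2 • b a from hmemA,
      show Matrix.toEuclideanLin B (b a) = (χ a).1 • b a from hmemB,
      smul_smul, smul_smul, ← add_smul]
  set U : Matrix (Fin d) (Fin d) ℂ := Matrix.of fun i j => b j i with hUdef
  have hUu : U ∈ Matrix.unitaryGroup (Fin d) ℂ := by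
    rw [Matrix.mem_unitaryGroup_iff']
    ext j k
    have := orthonormal_iff_ite.mp b.orthonormal j k
    simp only [PiLp.inner_apply, RCLike.inner_apply] at this
    simp only [Matrix.mul_apply, Matrix.star_apply, hUdef, Matrix.of_apply,
      Matrix.one_apply, ← this]
    exact Finset.sum_congr rfl (fun _ _ => mul_comm _ _)
  refine ⟨U, μ, hUu, ?_⟩
  have hVU : V * U = U * Matrix.diagonal μ := by
    ext i j
    have hcong := congrArg (fun v : EuclideanSpace ℂ (Fin d) => v i) (heig j)
    simp only [Matrix.mul_apply, hUdef, Matrix.of_apply, Matrix.diagonal_apply, mul_ite, mul_zero]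
    rw [Finset.sum_ite_eq' Finset.univ j (fun k => b k i * μ k)]
    simp only [Finset.mem_univ, if_true]
    calc ∑ k, V i k * b j k = (Matrix.toEuclideanLin V (b j)) i := rfl
      _ = (μ j • b j) i := hcong
      _ = b j i * μ j := by
        simp only [PiLp.smul_apply, smul_eq_mul]; ring
  have hUU : U * Uᴴ = 1 := by
    have := Matrix.mem_unitaryGroup_iff.mp hUu
    simpa [Matrix.star_eq_conjTranspose] using this
  calc V = V * (U * Uᴴ) := by rw [hUU, mul_one]
    _ = (V * U) * Uᴴ := by rw [mul_assoc]
    _ = U * Matrix.diagonal μ * Uᴴ := by rw [hVU]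

lemma dotself {n : Type*} [Fintype n] (x : n → ℂ) :
    star x ⬝ᵥ x = ((∑ i, ‖x i‖ ^ 2 : ℝ) : ℂ) := by
  push_cast
  apply Finset.sum_congr rfl
  intro i _
  simp only [Pi.star_apply, Complex.star_def]
  rw [mul_comm, Complex.mul_conj']

lemma numRange_conj_subset {n : Type*} [Fintype n] [DecidableEq n]
    (A U : Matrix n n ℂ) (hU : U ∈ Matrix.unitaryGroup n ℂ) :
    numericalRange (U * A * Uᴴ) ⊆ numericalRange A := by
  rintro z ⟨x, hx, rfl⟩
  have hUU : U * Uᴴ = 1 := by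
    simpa [Matrix.star_eq_conjTranspose] using Matrix.mem_unitaryGroup_iff.mp hU
  refine ⟨Uᴴ *ᵥ x, ?_, ?_⟩
  · have h1 : star (Uᴴ *ᵥ x) ⬝ᵥ (Uᴴ *ᵥ x) = star x ⬝ᵥ x := by
      rw [Matrix.star_mulVec, Matrix.conjTranspose_conjTranspose,
        ← Matrix.dotProduct_mulVec, Matrix.mulVec_mulVec, hUU, Matrix.one_mulVec]
    rw [dotself, dotself] at h1
    exact_mod_cast (Complex.ofReal_inj.mp h1) ▸ hx
  · rw [Matrix.star_mulVec, Matrix.conjTranspose_conjTranspose,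
      Matrix.mulVec_mulVec, ← Matrix.dotProduct_mulVec, Matrix.mulVec_mulVec]
    rw [Matrix.mul_assoc]

lemma numRange_conj {n : Type*} [Fintype n] [DecidableEq n]
    (A U : Matrix n n ℂ) (hU : U ∈ Matrix.unitaryGroup n ℂ) :
    numericalRange (U * A * Uᴴ) = numericalRange A := by
  apply Set.Subset.antisymm (numRange_conj_subset A U hU)
  have hU' : Uᴴ ∈ Matrix.unitaryGroup n ℂ := by
    rw [Matrix.mem_unitaryGroup_iff, Matrix.star_eq_conjTranspose,
      Matrix.conjTranspose_conjTranspose]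
    simpa [Matrix.star_eq_conjTranspose] using Matrix.mem_unitaryGroup_iff'.mp hU
  have := numRange_conj_subset (U * A * Uᴴ) Uᴴ hU'
  rw [Matrix.conjTranspose_conjTranspose] at this
  intro z hz
  apply this
  have hUU' : Uᴴ * U = 1 := by
    simpa [Matrix.star_eq_conjTranspose] using Matrix.mem_unitaryGroup_iff'.mp hU
  rw [show Uᴴ * (U * A * Uᴴ) * U = A by
    rw [Matrix.mul_assoc, Matrix.mul_assoc, hUU', Matrix.mul_one, ← Matrix.mul_assoc, hUU',
      Matrix.one_mul]]
  exact hz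

lemma mem_numRange_diagonal_iff {n : Type*} [Fintype n] [DecidableEq n]
    (ν : n → ℂ) (z : ℂ) :
    z ∈ numericalRange (Matrix.diagonal ν) ↔
      ∃ p : n → ℝ, (∀ i, 0 ≤ p i) ∧ (∑ i, p i) = 1 ∧ z = ∑ i, (p i : ℂ) * ν i := by
  constructor
  · rintro ⟨x, hx, rfl⟩
    refine ⟨fun i => ‖x i‖ ^ 2, fun i => sq_nonneg _, hx, ?_⟩
    simp only [dotProduct, Matrix.mulVec_diagonal, Pi.star_apply, Complex.star_def]
    apply Finset.sum_congr rfl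
    intro i _
    rw [show (starRingEnd ℂ) (x i) * (ν i * x i) = (starRingEnd ℂ) (x i) * x i * ν i by ring]
    rw [mul_comm ((starRingEnd ℂ) (x i)), Complex.mul_conj']
    push_cast
    ring
  · rintro ⟨p, hp, hp1, rfl⟩
    refine ⟨fun i => ((Real.sqrt (p i) : ℝ) : ℂ), ?_, ?_⟩
    · rw [← hp1]
      apply Finset.sum_congr rfl
      intro i _
      rw [Complex.norm_real, Real.norm_eq_abs, abs_of_nonneg (Real.sqrt_nonneg _), Real.sq_sqrt (hp i)]
    · simp only [dotProduct, Matrix.mulVec_diagonal, Pi.star_apply, Complex.star_def]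
      apply Finset.sum_congr rfl
      intro i _
      rw [Complex.conj_ofReal]
      rw [show ((Real.sqrt (p i) : ℝ) : ℂ) * (ν i * ((Real.sqrt (p i) : ℝ) : ℂ))
        = ((Real.sqrt (p i) : ℝ) : ℂ) * ((Real.sqrt (p i) : ℝ) : ℂ) * ν i by ring]
      rw [← Complex.ofReal_mul, Real.mul_self_sqrt (hp i)]

lemma spectrum_conj {n : Type*} [Fintype n] [DecidableEq n]
    (A U : Matrix n n ℂ) (hU : U ∈ Matrix.unitaryGroup n ℂ) :
    spectrum ℂ (U * A * Uᴴ) = spectrum ℂ A := by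
  have hUU : U * Uᴴ = 1 := by
    simpa [Matrix.star_eq_conjTranspose] using Matrix.mem_unitaryGroup_iff.mp hU
  have hUU' : Uᴴ * U = 1 := by
    simpa [Matrix.star_eq_conjTranspose] using Matrix.mem_unitaryGroup_iff'.mp hU
  exact spectrum.units_conjugate (u := ⟨U, Uᴴ, hUU, hUU'⟩)

lemma tri (a b : ℝ) : |a - b| ≤ |a| + |b| := by
  rw [sub_eq_add_neg]
  exact (abs_add_le a (-b)).trans_eq (by rw [abs_neg])

lemma branch {t s s' : ℝ} (ht : t < Real.pi) (hs0 : 0 ≤ s) (hst : s ≤ t)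
    (hs0' : 0 ≤ s') (hst' : s' ≤ t) {m m' : ℤ} {x y : ℝ}
    (hx : x = s + 2*Real.pi*m) (hy : y = s' + 2*Real.pi*m')
    (hxy : |y - x| ≤ Real.pi) : y - x = s' - s := by
  have hpi := Real.pi_pos
  have hm : m' = m := by
    by_contra hne
    have h1 : (1:ℝ) ≤ |((m':ℝ) - (m:ℝ))| := by
      have := Int.one_le_abs (sub_ne_zero.mpr hne)
      have : (1:ℝ) ≤ |((m' - m : ℤ) : ℝ)| := by exact_mod_cast this
      simpa [Int.cast_sub] using this
    have h2 : 2*Real.pi ≤ |2*Real.pi*((m':ℝ)-(m:ℝ))| := by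
      rw [abs_mul]
      have : |2*Real.pi| = 2*Real.pi := abs_of_pos (by linarith)
      rw [this]
      nlinarith
    have h3 : |2*Real.pi*((m':ℝ)-(m:ℝ))| ≤ |y - x| + |s' - s| := by
      have he : 2*Real.pi*((m':ℝ)-(m:ℝ)) = (y - x) - (s' - s) := by
        rw [hx, hy]; ring
      rw [he]
      exact tri _ _
    have h4 : |s' - s| ≤ t := abs_le.mpr ⟨by linarith, by linarith⟩
    linarith
  subst hm
  rw [hx, hy]; ring

lemma walk {t α δ θ₀ : ℝ} {N : ℕ} (ht0 : 0 ≤ t) (ht : t < Real.pi) (hδ : |δ| ≤ Real.pi)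
    (H : ∀ k : ℕ, k ≤ N → ∃ s : ℝ, 0 ≤ s ∧ s ≤ t ∧ ∃ m : ℤ,
      θ₀ + k*δ = α + (s + 2*Real.pi*m)) :
    |(N:ℝ) * δ| ≤ t := by
  choose s h0 h1 m hm using H
  have key : ∀ k : ℕ, ∀ hk : k ≤ N, (k:ℝ)*δ = s k hk - s 0 (Nat.zero_le N) := by
    intro k
    induction k with
    | zero => intro hk; simp
    | succ n ih =>
      intro hk
      have hn : n ≤ N := le_trans (Nat.le_succ n) hk
      have ihn := ih hn
      have hbr : (θ₀ + (n+1:ℕ)*δ - α) - (θ₀ + (n:ℕ)*δ - α) = s (n+1) hk - s n hn := by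
        refine branch ht (h0 n hn) (h1 n hn) (h0 (n+1) hk) (h1 (n+1) hk)
          (m := m n hn) (m' := m (n+1) hk) (by have := hm n hn; linarith)
          (by have := hm (n+1) hk; linarith) ?_
        have : (θ₀ + (n+1:ℕ)*δ - α) - (θ₀ + (n:ℕ)*δ - α) = δ := by push_cast; ring
        rw [this]; exact hδ
      have hδe : δ = s (n+1) hk - s n hn := by
        have h' : (θ₀ + (n+1:ℕ)*δ - α) - (θ₀ + (n:ℕ)*δ - α) = δ := by push_cast; ring
        linarith [hbr, h'.symm.trans hbr]
      push_cast
      push_cast at ihn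
      linarith
  have hN := key N le_rfl
  rw [hN]
  exact abs_le.mpr ⟨by linarith [h0 N le_rfl, h1 0 (Nat.zero_le N)],
    by linarith [h1 N le_rfl, h0 0 (Nat.zero_le N)]⟩

lemma sum_walk_fn {d N : ℕ} (θ : Fin d → ℝ) (i j : Fin d) (k : ℕ) (hk : k ≤ N) :
    (∑ l : Fin N, θ (if (l:ℕ) < k then j else i))
      = (N:ℝ)*θ i + (k:ℝ)*(θ j - θ i) := by
  classical
  simp only [apply_ite θ]
  rw [Finset.sum_ite]
  simp only [Finset.sum_const, smul_eq_mul, mul_comm]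
  have hcard : (Finset.filter (fun l : Fin N => (l:ℕ) < k) Finset.univ).card = k := by
    have : (Finset.filter (fun l : Fin N => (l:ℕ) < k) Finset.univ) =
        (Finset.range k).attachFin (fun m hm => lt_of_lt_of_le (Finset.mem_range.mp hm) hk) := by
      ext l; simp
    rw [this, Finset.card_attachFin, Finset.card_range]
  have hcard2 : (Finset.filter (fun l : Fin N => ¬ (l:ℕ) < k) Finset.univ).card = N - k := by
    have := Finset.card_filter_add_card_filter_not
      (s := (Finset.univ : Finset (Fin N))) (p := fun l : Fin N => (l:ℕ) < k)
    rw [hcard, Finset.card_univ, Fintype.card_fin] at this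
    omega
  rw [hcard, hcard2, nsmul_eq_mul, nsmul_eq_mul, Nat.cast_sub hk]
  ring

lemma ML {d N : ℕ} (hd : 0 < d) (hN : 1 ≤ N) {θ : Fin d → ℝ} {α t : ℝ}
    (ht0 : 0 ≤ t) (ht : t < Real.pi)
    (H : ∀ f : Fin N → Fin d, ∃ s : ℝ, 0 ≤ s ∧ s ≤ t ∧ ∃ m : ℤ,
      (∑ k, θ (f k)) = α + (s + 2*Real.pi*m)) :
    ∃ β : ℝ, ∀ i : Fin d, ∃ s : ℝ, 0 ≤ s ∧ s ≤ t/N ∧ ∃ m : ℤ,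
      θ i = β + (s + 2*Real.pi*m) := by
  have hpi := Real.pi_pos
  rcases eq_or_lt_of_le hN with hN1 | hN2
  · -- N = 1
    refine ⟨α, fun i => ?_⟩
    obtain ⟨s, hs0, hst, m, hm⟩ := H (fun _ => i)
    have hsum : (∑ k : Fin N, θ ((fun _ => i) k)) = (N:ℝ) * θ i := by
      simp [Finset.sum_const, mul_comm]
    rw [hsum, ← hN1] at hm
    refine ⟨s, hs0, ?_, m, ?_⟩
    · rw [← hN1]; push_cast; simpa using hst
    · push_cast at hm; linarith
  · -- 2 ≤ N
    have hN2' : (2:ℝ) ≤ (N:ℝ) := by exact_mod_cast hN2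
    have hNpos : (0:ℝ) < (N:ℝ) := by linarith
    -- pairwise bound
    have pair : ∀ i j : Fin d,
        |(θ j - θ i - 2*Real.pi*(round ((θ j - θ i)/(2*Real.pi)) : ℤ))| ≤ t/N := by
      intro i j
      set D := θ j - θ i with hD
      set R : ℤ := round (D/(2*Real.pi)) with hR
      set δ := D - 2*Real.pi*R with hδdef
      have hδπ : |δ| ≤ Real.pi := by
        have h1 : |D/(2*Real.pi) - R| ≤ 1/2 := abs_sub_round _
        have h2 : δ = (2*Real.pi) * (D/(2*Real.pi) - R) := by
          field_simp [hδdef]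
          exact hδdef
        rw [h2, abs_mul, abs_of_pos (by linarith : (0:ℝ) < 2*Real.pi)]
        nlinarith
      have hw : |(N:ℝ) * δ| ≤ t := by
        apply walk (θ₀ := (N:ℝ)*θ i) (α := α) ht0 ht hδπ
        intro k hk
        obtain ⟨s, hs0, hst, m, hm⟩ := H (fun l => if (l:ℕ) < k then j else i)
        rw [sum_walk_fn θ i j k hk] at hm
        refine ⟨s, hs0, hst, m - k*R, ?_⟩
        push_cast
        push_cast at hm
        rw [hδdef, hD]
        ring_nf
        ring_nf at hm
        linarith
      rw [abs_mul, abs_of_pos hNpos] at hw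
      rw [le_div_iff₀ hNpos]
      linarith [hw]
    set i₀ : Fin d := ⟨0, hd⟩ with hi₀
    set e : Fin d → ℝ :=
      fun i => θ i - θ i₀ - 2*Real.pi*(round ((θ i - θ i₀)/(2*Real.pi)) : ℤ) with he
    have he_bound : ∀ i, |e i| ≤ t/N := fun i => pair i₀ i
    have window : ∀ i j : Fin d, e j - e i ≤ t/N := by
      intro i j
      have hij := pair i j
      set δij := θ j - θ i - 2*Real.pi*(round ((θ j - θ i)/(2*Real.pi)) : ℤ) with hδij
      set M : ℤ := round ((θ j - θ i)/(2*Real.pi)) - round ((θ j - θ i₀)/(2*Real.pi))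
        + round ((θ i - θ i₀)/(2*Real.pi)) with hM
      have hejei : e j - e i = δij + 2*Real.pi*M := by
        rw [he, hδij, hM]
        push_cast
        ring
      have htN : t/(N:ℝ) ≤ t/2 := div_le_div_of_nonneg_left ht0 (by norm_num) hN2'
      have hM0 : M = 0 := by
        by_contra hMne
        have h1 : (1:ℝ) ≤ |(M:ℝ)| := by
          have := Int.one_le_abs hMne
          have : (1:ℝ) ≤ |((M : ℤ) : ℝ)| := by exact_mod_cast this
          simpa using this
        have hbound : |e j - e i| ≤ 2*(t/N) := by
          calc |e j - e i| ≤ |e j| + |e i| := tri _ _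
            _ ≤ 2*(t/N) := by linarith [he_bound i, he_bound j]
        have h2 : |2*Real.pi*(M:ℝ)| ≤ |e j - e i| + |δij| := by
          have he2 : 2*Real.pi*(M:ℝ) = (e j - e i) - δij := by rw [hejei]; ring
          rw [he2]; exact tri _ _
        have h3 : 2*Real.pi ≤ |2*Real.pi*(M:ℝ)| := by
          rw [abs_mul, abs_of_pos (by linarith : (0:ℝ) < 2*Real.pi)]
          nlinarith
        have hq : t / (N:ℝ) ≤ Real.pi / 2 := by
          calc t/(N:ℝ) ≤ t/2 := htN
            _ ≤ Real.pi/2 := by linarith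
        nlinarith [abs_nonneg (e j - e i), abs_nonneg δij]
      rw [hM0] at hejei
      push_cast at hejei
      rw [show e j - e i = δij by linarith [hejei]]
      calc δij ≤ |δij| := le_abs_self _
        _ ≤ t/N := hij
    obtain ⟨imin, _, hminle⟩ := Finset.exists_min_image Finset.univ e ⟨i₀, Finset.mem_univ i₀⟩
    refine ⟨θ i₀ + e imin, fun i => ?_⟩
    refine ⟨e i - e imin, by linarith [hminle i (Finset.mem_univ i)], window imin i,
      round ((θ i - θ i₀)/(2*Real.pi)), ?_⟩
    rw [he]
    push_cast
    ring

lemma separation {ι : Type*} [Fintype ι] [Nonempty ι] (w : ι → ℂ)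
    (h : ∀ p : ι → ℝ, (∀ i, 0 ≤ p i) → (∑ i, p i) = 1 → (∑ i, (p i : ℂ) * w i) ≠ 0) :
    ∃ u : ℂ, ∀ i, 0 < ((starRingEnd ℂ) u * w i).re := by
  classical
  set L : (ι → ℝ) →ₗ[ℝ] ℂ :=
    { toFun := fun p => ∑ i, p i • w i
      map_add' := by
        intro p q
        simp [add_smul, Finset.sum_add_distrib]
      map_smul' := by
        intro c p
        simp [smul_smul, Finset.smul_sum, mul_assoc] } with hL
  set K : Set ℂ := L '' (stdSimplex ℝ ι) with hK
  have hKc : IsCompact K := (isCompact_stdSimplex ℝ ι).image L.continuous_of_finiteDimensional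
  have hKconv : Convex ℝ K := (convex_stdSimplex ℝ ι).linear_image L
  have hKne : K.Nonempty := by
    obtain ⟨i⟩ := (inferInstance : Nonempty ι)
    exact ⟨L (Pi.single i 1), Set.mem_image_of_mem L (single_mem_stdSimplex ℝ i)⟩
  have hK0 : (0:ℂ) ∉ K := by
    rintro ⟨p, hp, hp0⟩
    refine h p hp.1 hp.2 ?_
    rw [← hp0, hL]
    simp only [LinearMap.coe_mk, AddHom.coe_mk]
    apply Finset.sum_congr rfl
    intro i _
    rw [Complex.real_smul]
  obtain ⟨v, hvK, hvmin⟩ := hKc.exists_isMinOn hKne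
    (Complex.continuous_normSq.continuousOn)
  have hv0 : v ≠ 0 := fun hv => hK0 (hv ▸ hvK)
  have hmain : ∀ z ∈ K, Complex.normSq v ≤ ((starRingEnd ℂ) v * z).re := by
    intro z hz
    set u := z - v with hu
    have expand : ∀ s : ℝ, Complex.normSq (v + s • u) =
        Complex.normSq v + 2*s*((starRingEnd ℂ) v * u).re + s^2 * Complex.normSq u := by
      intro s
      simp only [Complex.normSq_apply, Complex.add_re, Complex.add_im, Complex.mul_re,
        Complex.conj_re, Complex.conj_im, Complex.smul_re, Complex.smul_im,
        smul_eq_mul]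
      ring
    have hc : 0 ≤ ((starRingEnd ℂ) v * u).re := by
      by_contra hneg
      push_neg at hneg
      set c := ((starRingEnd ℂ) v * u).re with hcdef
      set q := Complex.normSq u with hq
      have h0q : (0:ℝ) ≤ q := hq ▸ Complex.normSq_nonneg u
      have hqpos : 0 < q + 1 := by linarith
      set s := min 1 (-c/(q+1)) with hs
      have hs0 : 0 < s := lt_min one_pos (div_pos (neg_pos.mpr hneg) hqpos)
      have hs1 : s ≤ 1 := min_le_left _ _
      have hsc : s ≤ -c/(q+1) := min_le_right _ _
      have hmem : v + s • u ∈ K := by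
        have := hKconv hvK hz (by linarith : (0:ℝ) ≤ 1 - s) (le_of_lt hs0) (by ring)
        convert this using 1
        rw [hu]
        module
      have hge : Complex.normSq v ≤ Complex.normSq (v + s • u) := hvmin hmem
      rw [expand s] at hge
      have h1 : s * (q+1) ≤ -c := (le_div_iff₀ hqpos).mp hsc
      have h2 : s * q ≤ -c := by nlinarith
      have hs2q : s^2 * q ≤ s * (-c) := by nlinarith
      nlinarith
    have : ((starRingEnd ℂ) v * z).re = Complex.normSq v + ((starRingEnd ℂ) v * u).re := by
      rw [hu]
      have : (starRingEnd ℂ) v * (z - v) = (starRingEnd ℂ) v * z - (starRingEnd ℂ) v * v := by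
        ring
      rw [this, Complex.sub_re, ← Complex.normSq_eq_conj_mul_self, Complex.ofReal_re]
      ring
    linarith
  refine ⟨v, fun i => ?_⟩
  have hwi : w i ∈ K := by
    refine ⟨Pi.single i 1, single_mem_stdSimplex ℝ i, ?_⟩
    rw [hL]
    simp only [LinearMap.coe_mk, AddHom.coe_mk]
    rw [Finset.sum_eq_single i (fun j _ hji => by simp [Pi.single_apply, hji])
      (fun hni => absurd (Finset.mem_univ i) hni)]
    simp
  have := hmain (w i) hwi
  have hnormpos : 0 < Complex.normSq v := Complex.normSq_pos.mpr hv0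
  linarith

lemma exp_I_eq_iff (x y : ℝ) :
    Complex.exp (Complex.I * x) = Complex.exp (Complex.I * y) ↔
      ∃ m : ℤ, x = y + 2*Real.pi*m := by
  rw [Complex.exp_eq_exp_iff_exists_int]
  constructor
  · rintro ⟨n, hn⟩
    refine ⟨n, ?_⟩
    have him := congrArg Complex.im hn
    simp only [Complex.mul_im, Complex.add_im, Complex.mul_re, Complex.I_re, Complex.I_im,
      Complex.ofReal_re, Complex.ofReal_im, Complex.intCast_re, Complex.intCast_im,
      Complex.re_ofNat, Complex.im_ofNat] at him
    linarith [him]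
  · rintro ⟨m, hm⟩
    exact ⟨m, by rw [hm]; push_cast; ring⟩

lemma abs_exp_I (x : ℝ) : ‖Complex.exp (Complex.I * x)‖ = 1 := by
  rw [Complex.norm_exp]
  simp

lemma two_pi_mem {n : Type*} [Fintype n] [DecidableEq n] (M : Matrix n n ℂ)
    (h : ∀ lam ∈ spectrum ℂ M, ‖lam‖ = 1) :
    (2*Real.pi) ∈ { t : ℝ | 0 ≤ t ∧ ∃ α : ℝ, ∀ lam ∈ spectrum ℂ M, ∃ s : ℝ, 0 ≤ s ∧ s ≤ t ∧
      lam = Complex.exp (Complex.I * (↑α + ↑s)) } := by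
  have hpi := Real.pi_pos
  refine ⟨by linarith, -Real.pi, fun lam hlam => ?_⟩
  refine ⟨lam.arg + Real.pi, by linarith [Complex.neg_pi_lt_arg lam],
    by linarith [Complex.arg_le_pi lam], ?_⟩
  have : ((-Real.pi : ℝ) : ℂ) + ((lam.arg + Real.pi : ℝ) : ℂ) = (lam.arg : ℂ) := by
    push_cast; ring
  rw [this, mul_comm]
  conv_lhs => rw [← Complex.norm_mul_exp_arg_mul_I lam]
  rw [h lam hlam]
  simp

lemma thetaArc_of_spectrum_empty {n : Type*} [Fintype n] [DecidableEq n]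
    (M : Matrix n n ℂ) (h : spectrum ℂ M = ∅) : thetaArc M = 0 := by
  have : { t : ℝ | 0 ≤ t ∧ ∃ α : ℝ, ∀ lam ∈ spectrum ℂ M, ∃ s : ℝ, 0 ≤ s ∧ s ≤ t ∧
      lam = Complex.exp (Complex.I * (↑α + ↑s)) } = Set.Ici 0 := by
    ext t
    simp [h, Set.mem_Ici]
  rw [thetaArc, this, csInf_Ici]


set_option maxHeartbeats 2000000 in
theorem stmt19 (d N : ℕ) (hN : 1 ≤ N) (V : Matrix (Fin d) (Fin d) ℂ)
    (hV : V ∈ Matrix.unitaryGroup (Fin d) ℂ) :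
    ((0 : ℂ) ∈ numericalRange (tensorPow V N) ↔ Real.pi ≤ (N : ℝ) * thetaArc V) ∧
    ((N : ℝ) * thetaArc V < Real.pi → thetaArc (tensorPow V N) = (N : ℝ) * thetaArc V) := by
  classical
  have hpi := Real.pi_pos
  have hNpos : (0:ℝ) < (N:ℝ) := by exact_mod_cast hN
  by_cases hdz : d = 0
  · subst hdz
    haveI hEmpty : IsEmpty (Fin N → Fin 0) := ⟨fun f => (f ⟨0, hN⟩).elim0⟩
    haveI hsub : Subsingleton (Matrix (Fin N → Fin 0) (Fin N → Fin 0) ℂ) :=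
      ⟨fun a b => by ext i j; exact hEmpty.elim i⟩
    haveI hsub0 : Subsingleton (Matrix (Fin 0) (Fin 0) ℂ) :=
      ⟨fun a b => by ext i j; exact i.elim0⟩
    have hspec0 : spectrum ℂ V = ∅ := by
      ext z; simp [spectrum.mem_iff, isUnit_of_subsingleton]
    have hspecT : spectrum ℂ (tensorPow V N) = ∅ := by
      ext z; simp [spectrum.mem_iff, isUnit_of_subsingleton]
    have hth0 : thetaArc V = 0 := thetaArc_of_spectrum_empty V hspec0
    have hthT : thetaArc (tensorPow V N) = 0 := thetaArc_of_spectrum_empty _ hspecT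
    refine ⟨⟨?_, ?_⟩, ?_⟩
    · rintro ⟨x, hx, -⟩
      rw [Finset.univ_eq_empty, Finset.sum_empty] at hx
      norm_num at hx
    · intro hple
      rw [hth0, mul_zero] at hple; linarith
    · intro _
      rw [hth0, hthT, mul_zero]
  have hd0 : 0 < d := Nat.pos_of_ne_zero hdz
  haveI : Nonempty (Fin d) := ⟨⟨0, hd0⟩⟩
  obtain ⟨U, μ, hU, hVeq⟩ := unitary_diag V hV
  have hUU : U * Uᴴ = 1 := by
    simpa [Matrix.star_eq_conjTranspose] using Matrix.mem_unitaryGroup_iff.mp hU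
  have hUU' : Uᴴ * U = 1 := by
    simpa [Matrix.star_eq_conjTranspose] using Matrix.mem_unitaryGroup_iff'.mp hU
  have hVV : V * Vᴴ = 1 := by
    simpa [Matrix.star_eq_conjTranspose] using Matrix.mem_unitaryGroup_iff.mp hV
  -- unit modulus of the eigenvalues
  have hD : Matrix.diagonal μ = Uᴴ * V * U := by
    rw [hVeq]
    symm
    calc Uᴴ * (U * Matrix.diagonal μ * Uᴴ) * U
        = (Uᴴ * U) * Matrix.diagonal μ * (Uᴴ * U) := by
          simp only [Matrix.mul_assoc]
      _ = Matrix.diagonal μ := by rw [hUU', Matrix.one_mul, Matrix.mul_one]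
  have hDDh : Matrix.diagonal μ * (Matrix.diagonal μ)ᴴ = 1 := by
    rw [hD]
    have e1 : (Uᴴ * V * U)ᴴ = Uᴴ * (Vᴴ * U) := by
      simp only [Matrix.conjTranspose_mul, Matrix.conjTranspose_conjTranspose,
        Matrix.mul_assoc]
    rw [e1]
    calc Uᴴ * V * U * (Uᴴ * (Vᴴ * U))
        = Uᴴ * (V * ((U * Uᴴ) * (Vᴴ * U))) := by simp only [Matrix.mul_assoc]
      _ = Uᴴ * (V * (Vᴴ * U)) := by rw [hUU, Matrix.one_mul]
      _ = Uᴴ * ((V * Vᴴ) * U) := by rw [Matrix.mul_assoc]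
      _ = Uᴴ * U := by rw [hVV, Matrix.one_mul]
      _ = 1 := hUU'
  have habs : ∀ i, ‖μ i‖ = 1 := by
    intro i
    have h1 : Matrix.diagonal (fun i => μ i * (starRingEnd ℂ) (μ i)) =
        (1 : Matrix (Fin d) (Fin d) ℂ) := by
      rw [← hDDh, Matrix.diagonal_conjTranspose, Matrix.diagonal_mul_diagonal]
      rfl
    have h2 := congrArg (fun M : Matrix (Fin d) (Fin d) ℂ => M i i) h1
    simp only [Matrix.diagonal_apply_eq, Matrix.one_apply_eq] at h2
    rw [Complex.mul_conj] at h2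
    have h3 : Complex.normSq (μ i) = 1 := by exact_mod_cast h2
    rw [Complex.norm_def, h3, Real.sqrt_one]
  set θ : Fin d → ℝ := fun i => (μ i).arg with hθdef
  have hμexp : ∀ i, μ i = Complex.exp (Complex.I * (θ i : ℝ)) := by
    intro i
    conv_lhs => rw [← Complex.norm_mul_exp_arg_mul_I (μ i)]
    rw [habs i, mul_comm ((θ i : ℂ))]
    simp
  set ν : (Fin N → Fin d) → ℂ := fun f => ∏ k, μ (f k) with hνdef
  have hνexp : ∀ f, ν f = Complex.exp (Complex.I * ((∑ k, θ (f k) : ℝ) : ℂ)) := by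
    intro f
    rw [hνdef]
    simp only
    calc ∏ k, μ (f k) = ∏ k, Complex.exp (Complex.I * (θ (f k) : ℝ)) :=
          Finset.prod_congr rfl (fun k _ => hμexp (f k))
      _ = Complex.exp (∑ k, Complex.I * (θ (f k) : ℝ)) := (Complex.exp_sum _ _).symm
      _ = Complex.exp (Complex.I * ((∑ k, θ (f k) : ℝ) : ℂ)) := by
          rw [← Finset.mul_sum]
          norm_cast
  -- spectra and numerical range
  have hspecV : spectrum ℂ V = Set.range μ := by
    rw [hVeq, spectrum_conj _ U hU, spectrum_diagonal]
  have hTP : tensorPow V N = tensorPow U N * Matrix.diagonal ν * (tensorPow U N)ᴴ := by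
    rw [hVeq, tensorPow_mul, tensorPow_mul, ← tensorPow_conjTranspose, tensorPow_diagonal]
  have hTU : tensorPow U N ∈ Matrix.unitaryGroup (Fin N → Fin d) ℂ := tensorPow_unitary U hU
  have hspecT : spectrum ℂ (tensorPow V N) = Set.range ν := by
    rw [hTP, spectrum_conj _ _ hTU, spectrum_diagonal]
  have hWT : numericalRange (tensorPow V N) = numericalRange (Matrix.diagonal ν) := by
    rw [hTP, numRange_conj _ _ hTU]
  -- the arc sets
  set SV : Set ℝ := { t : ℝ | 0 ≤ t ∧ ∃ α : ℝ, ∀ lam ∈ spectrum ℂ V, ∃ s : ℝ, 0 ≤ s ∧ s ≤ t ∧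
    lam = Complex.exp (Complex.I * (↑α + ↑s)) } with hSVdef
  set ST : Set ℝ := { t : ℝ | 0 ≤ t ∧ ∃ α : ℝ, ∀ lam ∈ spectrum ℂ (tensorPow V N),
    ∃ s : ℝ, 0 ≤ s ∧ s ≤ t ∧ lam = Complex.exp (Complex.I * (↑α + ↑s)) } with hSTdef
  have hthV : thetaArc V = sInf SV := rfl
  have hthT : thetaArc (tensorPow V N) = sInf ST := rfl
  have hSVne : SV.Nonempty := by
    refine ⟨2*Real.pi, two_pi_mem V ?_⟩
    rw [hspecV]; rintro lam ⟨i, rfl⟩; exact habs i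
  have hSTne : ST.Nonempty := by
    refine ⟨2*Real.pi, two_pi_mem _ ?_⟩
    rw [hspecT]; rintro lam ⟨f, rfl⟩; rw [hνexp f]; exact abs_exp_I _
  have hSVbdd : BddBelow SV := ⟨0, fun t ht => ht.1⟩
  have hSTbdd : BddBelow ST := ⟨0, fun t ht => ht.1⟩
  -- products lie on the N-times-larger arc
  have prod_arc : ∀ (t α : ℝ),
      (∀ lam ∈ spectrum ℂ V, ∃ s : ℝ, 0 ≤ s ∧ s ≤ t ∧
        lam = Complex.exp (Complex.I * (↑α + ↑s))) →
      ∀ f : Fin N → Fin d, ∃ u : ℝ, 0 ≤ u ∧ u ≤ (N:ℝ)*t ∧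
        ν f = Complex.exp (Complex.I * (↑((N:ℝ)*α) + ↑u)) := by
    intro t α hα f
    have hmemμ : ∀ k : Fin N, μ (f k) ∈ spectrum ℂ V := by
      intro k; rw [hspecV]; exact ⟨f k, rfl⟩
    choose s hs0 hst hse using fun k : Fin N => hα (μ (f k)) (hmemμ k)
    refine ⟨∑ k, s k, Finset.sum_nonneg (fun k _ => hs0 k), ?_, ?_⟩
    · calc (∑ k, s k) ≤ ∑ _k : Fin N, t := Finset.sum_le_sum (fun k _ => hst k)
        _ = (N:ℝ)*t := by simp [Finset.sum_const, nsmul_eq_mul]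
    · calc ν f = ∏ k, μ (f k) := rfl
        _ = ∏ k, Complex.exp (Complex.I * (↑α + ↑(s k))) :=
            Finset.prod_congr rfl (fun k _ => hse k)
        _ = Complex.exp (∑ k, Complex.I * (↑α + ↑(s k))) := (Complex.exp_sum _ _).symm
        _ = Complex.exp (Complex.I * (↑((N:ℝ)*α) + ↑(∑ k, s k))) := by
            rw [← Finset.mul_sum]
            congr 1
            rw [Finset.sum_add_distrib, Finset.sum_const]
            push_cast
            simp [nsmul_eq_mul]
  -- membership builder for SV
  have mkSV : ∀ (β t' : ℝ), 0 ≤ t' →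
      (∀ i, ∃ s : ℝ, 0 ≤ s ∧ s ≤ t' ∧ ∃ m : ℤ, θ i = β + (s + 2*Real.pi*m)) →
      t' ∈ SV := by
    intro β t' h0 hall
    refine ⟨h0, β, ?_⟩
    rw [hspecV]; rintro lam ⟨i, rfl⟩
    obtain ⟨s, h1, h2, m, hm⟩ := hall i
    refine ⟨s, h1, h2, ?_⟩
    rw [hμexp i]
    have : Complex.exp (Complex.I * ((θ i : ℝ) : ℂ)) =
        Complex.exp (Complex.I * ((β + s : ℝ) : ℂ)) :=
      (exp_I_eq_iff _ _).mpr ⟨m, by linarith⟩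
    rw [this]
    push_cast
    ring_nf
  -- hypothesis builder for ML from ST-arc data
  have fromArc : ∀ (t' α' : ℝ),
      (∀ lam ∈ spectrum ℂ (tensorPow V N), ∃ s : ℝ, 0 ≤ s ∧ s ≤ t' ∧
        lam = Complex.exp (Complex.I * (↑α' + ↑s))) →
      ∀ f : Fin N → Fin d, ∃ s : ℝ, 0 ≤ s ∧ s ≤ t' ∧ ∃ m : ℤ,
        (∑ k, θ (f k)) = α' + (s + 2*Real.pi*m) := by
    intro t' α' h f
    obtain ⟨s, h1, h2, he⟩ := h (ν f) (by rw [hspecT]; exact ⟨f, rfl⟩)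
    refine ⟨s, h1, h2, ?_⟩
    have hexp : Complex.exp (Complex.I * ((∑ k, θ (f k) : ℝ) : ℂ)) =
        Complex.exp (Complex.I * ((α' + s : ℝ) : ℂ)) := by
      rw [← hνexp f, he]
      push_cast
      ring_nf
    obtain ⟨m, hm⟩ := (exp_I_eq_iff _ _).mp hexp
    exact ⟨m, by linarith⟩
  -- Direction A : N·Θ < π → 0 ∉ W
  have dirA : (N:ℝ) * thetaArc V < Real.pi →
      (0:ℂ) ∉ numericalRange (tensorPow V N) := by
    intro hlt h0
    rw [hWT, mem_numRange_diagonal_iff] at h0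
    obtain ⟨p, hp0, hp1, hpz⟩ := h0
    have hΘlt : sInf SV < Real.pi / N := by
      rw [lt_div_iff₀ hNpos]
      rw [hthV] at hlt
      linarith [hlt, mul_comm (sInf SV) ((N:ℝ))]
    obtain ⟨t, htS, htlt⟩ := exists_lt_of_csInf_lt hSVne hΘlt
    obtain ⟨ht0, α, hα⟩ := htS
    have hNt : (N:ℝ)*t < Real.pi := by
      rw [lt_div_iff₀ hNpos] at htlt
      linarith [htlt, mul_comm t ((N:ℝ))]
    set c : ℝ := (N:ℝ)*t/2 with hcdef
    have hc0 : 0 ≤ c := by positivity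
    have hcπ : c < Real.pi/2 := by rw [hcdef]; linarith
    have hcos0 : 0 < Real.cos c :=
      Real.cos_pos_of_mem_Ioo ⟨by linarith, hcπ⟩
    have key := prod_arc t α hα
    have hterm : ∀ f : Fin N → Fin d,
        Real.cos c * p f ≤
          (Complex.exp (-(Complex.I * ((↑((N:ℝ)*α) + ↑c)))) * ((p f:ℂ) * ν f)).re := by
      intro f
      obtain ⟨u, hu0, hut, hue⟩ := key f
      have hprod : Complex.exp (-(Complex.I * ((↑((N:ℝ)*α) + ↑c)))) * ((p f:ℂ) * ν f)
          = (p f : ℂ) * Complex.exp (((u - c : ℝ) : ℂ) * Complex.I) := by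
        rw [hue, ← mul_assoc, mul_comm (Complex.exp _) ((p f:ℂ)), mul_assoc,
          ← Complex.exp_add]
        congr 1
        push_cast
        ring
      rw [hprod, Complex.re_ofReal_mul, Complex.exp_ofReal_mul_I_re]
      have hle : Real.cos c ≤ Real.cos (u - c) := by
        have h1 : |u - c| ≤ c := by
          rw [abs_le]; constructor <;> [linarith; linarith]
        calc Real.cos c ≤ Real.cos |u - c| := by
              apply Real.cos_le_cos_of_nonneg_of_le_pi (abs_nonneg _) (by linarith) h1
          _ = Real.cos (u - c) := Real.cos_abs _
      calc Real.cos c * p f ≤ Real.cos (u - c) * p f :=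
            mul_le_mul_of_nonneg_right hle (hp0 f)
        _ = p f * Real.cos (u - c) := mul_comm _ _
    have hsum : Real.cos c ≤
        (Complex.exp (-(Complex.I * ((↑((N:ℝ)*α) + ↑c)))) * ∑ f, (p f:ℂ) * ν f).re := by
      rw [Finset.mul_sum, Complex.re_sum]
      calc Real.cos c = Real.cos c * ∑ f, p f := by rw [hp1, mul_one]
        _ = ∑ f, Real.cos c * p f := by rw [Finset.mul_sum]
        _ ≤ _ := Finset.sum_le_sum (fun f _ => hterm f)
    rw [← hpz, mul_zero, Complex.zero_re] at hsum
    linarith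
  -- Direction B : 0 ∉ W → N·Θ < π
  have dirB : (0:ℂ) ∉ numericalRange (tensorPow V N) → (N:ℝ) * thetaArc V < Real.pi := by
    intro h0
    rw [hWT] at h0
    have hsep : ∀ p : (Fin N → Fin d) → ℝ, (∀ f, 0 ≤ p f) → (∑ f, p f) = 1 →
        (∑ f, (p f:ℂ) * ν f) ≠ 0 := by
      intro p hp hs hz
      exact h0 ((mem_numRange_diagonal_iff ν 0).mpr ⟨p, hp, hs, hz.symm⟩)
    obtain ⟨u, hu⟩ := separation ν hsep
    set cu : ℂ := (starRingEnd ℂ) u with hcud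
    set f₀ : Fin N → Fin d := fun _ => ⟨0, hd0⟩ with hf₀
    have hu0 : u ≠ 0 := by
      intro h
      have := hu f₀
      rw [hcud] at this
      rw [h] at this
      simp at this
    set a : (Fin N → Fin d) → ℝ := fun f => (cu * ν f).arg with hadef
    have haπ : ∀ f, |a f| < Real.pi/2 := fun f =>
      Complex.abs_arg_lt_pi_div_two_iff.mpr (Or.inl (hu f))
    obtain ⟨fmin, -, hfmin⟩ := Finset.exists_min_image Finset.univ a ⟨f₀, Finset.mem_univ _⟩
    obtain ⟨fmax, -, hfmax⟩ := Finset.exists_max_image Finset.univ a ⟨f₀, Finset.mem_univ _⟩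
    set t : ℝ := a fmax - a fmin with htdef
    have ht0 : 0 ≤ t := by
      have := hfmin fmax (Finset.mem_univ _)
      rw [htdef]; linarith
    have ht : t < Real.pi := by
      have h1 := abs_lt.mp (haπ fmax)
      have h2 := abs_lt.mp (haπ fmin)
      rw [htdef]; linarith [h1.2, h2.1]
    have habsu : ‖cu‖ = ‖u‖ := by rw [hcud, Complex.norm_conj]
    have hcong : ∀ f : Fin N → Fin d, ∃ s : ℝ, 0 ≤ s ∧ s ≤ t ∧ ∃ m : ℤ,
        (∑ k, θ (f k)) = (a fmin - cu.arg) + (s + 2*Real.pi*m) := by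
      intro f
      have h1 : cu * ν f = ↑‖u‖ * Complex.exp (Complex.I * ((a f : ℝ) : ℂ)) := by
        conv_lhs => rw [← Complex.norm_mul_exp_arg_mul_I (cu * ν f)]
        have habs2 : ‖cu * ν f‖ = ‖u‖ := by
          rw [norm_mul, habsu, hνexp f, abs_exp_I, mul_one]
        rw [habs2, mul_comm ((((cu * ν f).arg : ℝ)) : ℂ) Complex.I]
      have h2 : cu * ν f =
          ↑‖u‖ * Complex.exp (Complex.I * ((cu.arg + ∑ k, θ (f k) : ℝ) : ℂ)) := by
        conv_lhs => rw [← Complex.norm_mul_exp_arg_mul_I cu, hνexp f]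
        rw [habsu, mul_assoc, ← Complex.exp_add]
        congr 1
        push_cast
        ring
      have habs0 : ((‖u‖ : ℝ) : ℂ) ≠ 0 := by
        simp only [ne_eq, Complex.ofReal_eq_zero]
        exact (norm_ne_zero_iff.mpr hu0)
      have h3 : Complex.exp (Complex.I * ((cu.arg + ∑ k, θ (f k) : ℝ) : ℂ)) =
          Complex.exp (Complex.I * ((a f : ℝ) : ℂ)) :=
        mul_left_cancel₀ habs0 (h2.symm.trans h1)
      obtain ⟨m, hm⟩ := (exp_I_eq_iff _ _).mp h3
      refine ⟨a f - a fmin, by linarith [hfmin f (Finset.mem_univ f)],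
        by rw [htdef]; linarith [hfmax f (Finset.mem_univ f)], m, by linarith⟩
    obtain ⟨β, hβ⟩ := ML hd0 hN ht0 ht hcong
    have hmem := mkSV β (t / N) (by positivity) hβ
    have hle : thetaArc V ≤ t / N := by rw [hthV]; exact csInf_le hSVbdd hmem
    calc (N:ℝ) * thetaArc V ≤ (N:ℝ) * (t/N) :=
          mul_le_mul_of_nonneg_left hle hNpos.le
      _ = t := by field_simp
      _ < Real.pi := ht
  refine ⟨⟨?_, ?_⟩, ?_⟩
  · intro h0W
    by_contra hlt
    push_neg at hlt
    exact dirA hlt h0W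
  · intro hge
    by_contra h0W
    have := dirB h0W
    linarith
  · intro hlt
    apply le_antisymm
    · -- Θ(V^{⊗N}) ≤ N Θ(V)
      have hstep : ∀ t ∈ SV, sInf ST ≤ (N:ℝ)*t := by
        intro t htS
        obtain ⟨ht0, α, hα⟩ := htS
        apply csInf_le hSTbdd
        refine ⟨by positivity, (N:ℝ)*α, ?_⟩
        rw [hspecT]; rintro lam ⟨f, rfl⟩
        obtain ⟨w, h1, h2, h3⟩ := prod_arc t α hα f
        exact ⟨w, h1, h2, h3⟩
      rw [hthT, hthV]
      have hdiv : sInf ST / N ≤ sInf SV := by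
        apply le_csInf hSVne
        intro t htS
        rw [div_le_iff₀ hNpos]
        have := hstep t htS
        linarith [this, mul_comm t ((N:ℝ))]
      rw [div_le_iff₀ hNpos] at hdiv
      linarith [hdiv, mul_comm (sInf SV) ((N:ℝ))]
    · -- N Θ(V) ≤ Θ(V^{⊗N})
      rw [hthT]
      apply le_csInf hSTne
      intro t' ht'S
      rcases le_or_gt Real.pi t' with hcase | hcase
      · linarith
      · obtain ⟨ht'0, α', hα'⟩ := ht'S
        obtain ⟨β, hβ⟩ := ML hd0 hN ht'0 hcase (fromArc t' α' hα')
        have hmem := mkSV β (t'/N) (by positivity) hβ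
        have hle : thetaArc V ≤ t'/N := by rw [hthV]; exact csInf_le hSVbdd hmem
        calc (N:ℝ) * thetaArc V ≤ (N:ℝ) * (t'/N) :=
              mul_le_mul_of_nonneg_left hle hNpos.le
          _ = t' := by field_simp

end Paper
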